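/- With A and J the n×n complex matrices defined in the context, one has A² = −J. -/

import Mathlib

open Matrix

theorem stmt_1 (n : ℕ) (hn : 2 ≤ n) (z : ℂ) (hz : z + starRingEnd ℂ z = 0)
    (v : Fin (n - 1) → ℂ) (hv : v ≠ 0)
    (hnorm : z * starRingEnd ℂ z + ∑ i, starRingEnd ℂ (v i) * v i = 1)
    (A J : Matrix (Fin 1 ⊕ Fin (n - 1)) (Fin 1 ⊕ Fin (n - 1)) ℂ)
    (hA : A = Matrix.fromBlocks
      (Matrix.of fun _ _ => z)
      (Matrix.of fun _ j => -starRingEnd ℂ (v j))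
      (Matrix.of fun i _ => v i)
      (Matrix.of fun i j =>
        -(v i * z * starRingEnd ℂ (v j)) / (∑ k, starRingEnd ℂ (v k) * v k)))
    (hJ : J = Matrix.fromBlocks 1 0 0
      (Matrix.of fun i j =>
        v i * starRingEnd ℂ (v j) / (∑ k, starRingEnd ℂ (v k) * v k))) :
    A ^ 2 = -J := by
  have hzz : starRingEnd ℂ z = -z := by linear_combination hz
  set s : ℂ := ∑ k, starRingEnd ℂ (v k) * v k with hs
  have hs' : s = ((∑ k, Complex.normSq (v k) : ℝ) : ℂ) := by
    push_cast
    refine Finset.sum_congr rfl fun k _ => ?_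
    rw [Complex.normSq_eq_conj_mul_self]
  have hspos : (0:ℝ) < ∑ k, Complex.normSq (v k) := by
    obtain ⟨i, hi⟩ := Function.ne_iff.mp hv
    exact Finset.sum_pos' (fun k _ => Complex.normSq_nonneg _)
      ⟨i, Finset.mem_univ i, Complex.normSq_pos.mpr hi⟩
  have hsne : s ≠ 0 := by rw [hs']; exact_mod_cast hspos.ne'
  have hsval : s = 1 + z * z := by
    rw [hzz] at hnorm; linear_combination hnorm
  subst hA hJ
  rw [sq, fromBlocks_multiply]
  ext i j
  rcases i with i | i <;> rcases j with j | j
  · simp only [Matrix.mul_apply, Matrix.of_apply, Matrix.neg_apply, ← hs,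
      Finset.sum_const, Finset.card_univ, Fintype.card_fin, one_smul, neg_mul,
      Matrix.fromBlocks_apply₁₁, Matrix.add_apply]
    rw [Subsingleton.elim i j, Matrix.one_apply_eq]
    rw [show (∑ x, -((starRingEnd ℂ) (v x) * v x)) = -s by rw [hs, Finset.sum_neg_distrib]]
    linear_combination -hsval
  · simp only [Matrix.mul_apply, Matrix.of_apply, Matrix.neg_apply, Matrix.zero_apply,
      Finset.sum_const, Finset.card_univ, Fintype.card_fin, one_smul, ← hs,
      Matrix.fromBlocks_apply₁₂, Matrix.add_apply]
    rw [show (∑ x, -(starRingEnd ℂ) (v x) * (-(v x * z * (starRingEnd ℂ) (v j)) / s))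
        = s * (z * (starRingEnd ℂ) (v j) / s) by
      rw [hs, Finset.sum_mul]
      exact Finset.sum_congr rfl fun x _ => by ring]
    field_simp
    ring
  · simp only [Matrix.mul_apply, Matrix.of_apply, Matrix.neg_apply, Matrix.zero_apply,
      Finset.sum_const, Finset.card_univ, Fintype.card_fin, one_smul, ← hs,
      Matrix.fromBlocks_apply₂₁, Matrix.add_apply]
    rw [show (∑ x, -(v i * z * (starRingEnd ℂ) (v x)) / s * v x)
        = s * (-(v i * z) / s) by
      rw [hs, Finset.sum_mul]
      exact Finset.sum_congr rfl fun x _ => by ring]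
    field_simp
    ring
  · simp only [Matrix.mul_apply, Matrix.of_apply, Matrix.neg_apply,
      Finset.sum_const, Finset.card_univ, Fintype.card_fin, one_smul, ← hs,
      Matrix.fromBlocks_apply₂₂, Matrix.add_apply]
    rw [show (∑ x, -(v i * z * (starRingEnd ℂ) (v x)) / s * (-(v x * z * (starRingEnd ℂ) (v j)) / s))
        = s * (v i * z * z * (starRingEnd ℂ) (v j) / (s * s)) by
      rw [hs, Finset.sum_mul]
      exact Finset.sum_congr rfl fun x _ => by ring]
    field_simp
    linear_combination (-(v i * starRingEnd ℂ (v j))) * hsval
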